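/- Let a, b, c be integers with a > b ≥ 0 and c ≥ 0. Then, in ℤ[v, v^{−1}], Σ_{k=0}^{c} (−1)^{c−k} v^{−k(b+c)} [a−b−1+c−k, a−b−1] · [a+c, k] = v^{−c(a+c)} [b+c, c]. -/

import Mathlib

/-- The variable `v`, viewed inside the field of rational functions (which
contains the Laurent polynomial ring `ℤ[v,v⁻¹]`). -/
noncomputable def vv : RatFunc ℚ := RatFunc.X

/-- The Gaussian polynomial `[[N,t]] = ∏_{i=1}^{t} (v^{2(N-i+1)} - 1)/(v^{2i} - 1)`,
set to `0` when `t < 0` or `t > N`. -/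
noncomputable def gauss2 (N t : ℤ) : RatFunc ℚ :=
  if 0 ≤ t ∧ t ≤ N then
    ∏ i ∈ Finset.range t.toNat, (vv ^ (2 * (N - (i : ℤ))) - 1) / (vv ^ (2 * ((i : ℤ) + 1)) - 1)
  else 0

/-- The symmetric Gaussian binomial `[N,t] = v^{-t(N-t)}·[[N,t]]`. -/
noncomputable def sgauss (N t : ℤ) : RatFunc ℚ := vv ^ (-(t * (N - t))) * gauss2 N t

open Finset

lemma vv_ne_zero : vv ≠ 0 := RatFunc.X_ne_zero

lemma vpow_sub_one_ne_zero {n : ℤ} (hn : 1 ≤ n) : vv ^ n - 1 ≠ 0 := by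
  lift n to ℕ using le_trans zero_le_one hn
  rw [zpow_natCast]
  have hX : vv = algebraMap (Polynomial ℚ) (RatFunc ℚ) Polynomial.X := rfl
  rw [hX, ← map_pow, show (1 : RatFunc ℚ) = algebraMap (Polynomial ℚ) (RatFunc ℚ) 1 from (map_one _).symm, ← map_sub]
  intro h
  have h2 : (Polynomial.X ^ n - 1 : Polynomial ℚ) = 0 :=
    RatFunc.algebraMap_injective ℚ (by simpa using h)
  have h3 := congrArg (Polynomial.eval 0) h2
  have hn' : n ≠ 0 := by exact_mod_cast by omega
  simp [zero_pow hn'] at h3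

/-- `Pn n = ∏_{i=1}^n (v^{2i} - 1)` -/
noncomputable def Pn (n : ℕ) : RatFunc ℚ := ∏ i ∈ Finset.range n, (vv ^ (2*(i:ℤ)+2) - 1)

lemma Pn_ne_zero (n : ℕ) : Pn n ≠ 0 := by
  apply Finset.prod_ne_zero_iff.mpr
  intro i _
  exact vpow_sub_one_ne_zero (by omega)

lemma Pn_zero : Pn 0 = 1 := rfl

lemma Pn_succ (n : ℕ) : Pn (n+1) = Pn n * (vv ^ (2*(n:ℤ)+2) - 1) := Finset.prod_range_succ _ _

lemma gauss2_eq {N t : ℤ} (h0 : 0 ≤ t) (h1 : t ≤ N) :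
    gauss2 N t = Pn N.toNat / (Pn t.toNat * Pn (N-t).toNat) := by
  rw [gauss2, if_pos ⟨h0, h1⟩, Finset.prod_div_distrib]
  have hden : ∏ i ∈ Finset.range t.toNat, (vv ^ (2 * ((i:ℤ) + 1)) - 1) = Pn t.toNat := by
    apply Finset.prod_congr rfl
    intro i _
    congr 1
  rw [hden]
  have hNn : N.toNat = (N - t).toNat + t.toNat := by omega
  have hnum : ∏ i ∈ Finset.range t.toNat, (vv ^ (2 * (N - (i:ℤ))) - 1)
      = Pn N.toNat / Pn (N-t).toNat := by
    rw [eq_div_iff (Pn_ne_zero _), hNn]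
    have hsplit : Pn ((N-t).toNat + t.toNat)
        = Pn (N-t).toNat * ∏ i ∈ Finset.range t.toNat, (vv ^ (2*(((N-t).toNat:ℤ) + (i:ℤ))+2) - 1) := by
      rw [Pn, Finset.prod_range_add, ← Pn]
      congr 1
    rw [hsplit, mul_comm (Pn (N-t).toNat) _]
    congr 1
    rw [← Finset.prod_range_reflect]
    apply Finset.prod_congr rfl
    intro i hi
    rw [Finset.mem_range] at hi
    have hcast : ((t.toNat - 1 - i : ℕ) : ℤ) = t - 1 - i := by omega
    congr 1
    rw [hcast]
    congr 1
    omega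
  rw [hnum]
  rw [mul_comm (Pn t.toNat)]
  field_simp

lemma gauss2_out {N t : ℤ} (h : t < 0 ∨ N < t) : gauss2 N t = 0 := by
  rw [gauss2, if_neg]; omega

lemma sgauss_out {N t : ℤ} (h : t < 0 ∨ N < t) : sgauss N t = 0 := by
  rw [sgauss, gauss2_out h, mul_zero]

lemma gauss2_ne_zero {N t : ℤ} (h0 : 0 ≤ t) (h1 : t ≤ N) : gauss2 N t ≠ 0 := by
  rw [gauss2_eq h0 h1]
  exact div_ne_zero (Pn_ne_zero _) (mul_ne_zero (Pn_ne_zero _) (Pn_ne_zero _))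

lemma gauss2_symm {N t : ℤ} (hN : 0 ≤ N) : gauss2 N t = gauss2 N (N - t) := by
  by_cases h : 0 ≤ t ∧ t ≤ N
  · rw [gauss2_eq h.1 h.2, gauss2_eq (by omega) (by omega), show N - (N - t) = t by ring]
    rw [mul_comm]
  · rw [gauss2_out (by omega), gauss2_out (by omega)]

lemma sgauss_symm {N t : ℤ} (hN : 0 ≤ N) : sgauss N t = sgauss N (N - t) := by
  rw [sgauss, sgauss, gauss2_symm hN, show N - (N - t) = t by ring,
    show -((N - t) * t) = -(t * (N - t)) by ring]

lemma gauss2_zero {N : ℤ} (hN : 0 ≤ N) : gauss2 N 0 = 1 := by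
  rw [gauss2, if_pos ⟨le_refl 0, hN⟩]
  simp

lemma sgauss_zero {N : ℤ} (hN : 0 ≤ N) : sgauss N 0 = 1 := by
  rw [sgauss, gauss2_zero hN]
  norm_num

lemma gauss2_self {N : ℤ} (hN : 0 ≤ N) : gauss2 N N = 1 := by
  rw [gauss2_eq hN le_rfl, sub_self]
  show _ / (_ * Pn (0:ℤ).toNat) = 1
  rw [show (0:ℤ).toNat = 0 from rfl, Pn_zero, mul_one, div_self (Pn_ne_zero _)]

lemma sgauss_self {N : ℤ} (hN : 0 ≤ N) : sgauss N N = 1 := by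
  rw [sgauss, gauss2_self hN, sub_self, mul_zero, neg_zero, zpow_zero, mul_one]

lemma pascal_core (P p Q X Y : RatFunc ℚ) (hp : p ≠ 0) (hQ : Q ≠ 0) (hX : X - 1 ≠ 0)
    (hY : Y - 1 ≠ 0) :
    P * (X*Y - 1) / (p * (X-1) * (Q * (Y-1)))
      = P / (p * (Q * (Y-1))) + X * (P / (p * (X-1) * Q)) := by
  field_simp
  ring

lemma pascal_core' (P p Q X Y : RatFunc ℚ) (hp : p ≠ 0) (hQ : Q ≠ 0) (hX : X - 1 ≠ 0)
    (hY : Y - 1 ≠ 0) :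
    P * (X*Y - 1) / (p * (X-1) * (Q * (Y-1)))
      = Y * (P / (p * (Q * (Y-1)))) + P / (p * (X-1) * Q) := by
  field_simp
  ring

/-- Pascal: `[[N,t]] = [[N-1,t-1]] + q^t [[N-1,t]]` for `1 ≤ t ≤ N`. -/
lemma gauss2_pascal {N t : ℤ} (h0 : 1 ≤ t) (h1 : t ≤ N) :
    gauss2 N t = gauss2 (N-1) (t-1) + vv ^ (2*t) * gauss2 (N-1) t := by
  rcases eq_or_lt_of_le h1 with rfl | hlt
  · rw [gauss2_self (by omega), gauss2_self (by omega), gauss2_out (Or.inr (by omega)),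
      mul_zero, add_zero]
  · -- 1 ≤ t ≤ N - 1
    have e1 : gauss2 N t = Pn N.toNat / (Pn t.toNat * Pn (N-t).toNat) := gauss2_eq (by omega) h1
    have e2 : gauss2 (N-1) (t-1) = Pn (N-1).toNat / (Pn (t-1).toNat * Pn (N-t).toNat) := by
      rw [gauss2_eq (by omega) (by omega), show N - 1 - (t - 1) = N - t by ring]
    have e3 : gauss2 (N-1) t = Pn (N-1).toNat / (Pn t.toNat * Pn (N-1-t).toNat) :=
      gauss2_eq (by omega) (by omega)
    have sN : Pn N.toNat = Pn (N-1).toNat * (vv ^ (2*N) - 1) := by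
      rw [show N.toNat = (N-1).toNat + 1 by omega, Pn_succ,
        show 2*(((N-1).toNat:ℤ))+2 = 2*N by omega]
    have st : Pn t.toNat = Pn (t-1).toNat * (vv ^ (2*t) - 1) := by
      rw [show t.toNat = (t-1).toNat + 1 by omega, Pn_succ,
        show 2*(((t-1).toNat:ℤ))+2 = 2*t by omega]
    have sNt : Pn (N-t).toNat = Pn (N-1-t).toNat * (vv ^ (2*(N-t)) - 1) := by
      rw [show (N-t).toNat = (N-1-t).toNat + 1 by omega, Pn_succ,
        show 2*(((N-1-t).toNat:ℤ))+2 = 2*(N-t) by omega]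
    have hvN : vv ^ (2*N) = vv ^ (2*t) * vv ^ (2*(N-t)) := by
      rw [← zpow_add₀ vv_ne_zero]
      congr 1
      ring
    have n1 := Pn_ne_zero (t-1).toNat
    have n2 := Pn_ne_zero (N-1-t).toNat
    have n4 : vv ^ (2*t) - 1 ≠ 0 := vpow_sub_one_ne_zero (by omega)
    have n5 : vv ^ (2*(N-t)) - 1 ≠ 0 := vpow_sub_one_ne_zero (by omega)
    rw [e1, e2, e3, sN, st, sNt, hvN]
    exact pascal_core _ _ _ _ _ n1 n2 n4 n5

/-- Pascal, other form: `[[N,t]] = q^(N-t) [[N-1,t-1]] + [[N-1,t]]` for `1 ≤ t ≤ N`. -/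
lemma gauss2_pascal' {N t : ℤ} (h0 : 1 ≤ t) (h1 : t ≤ N) :
    gauss2 N t = vv ^ (2*(N-t)) * gauss2 (N-1) (t-1) + gauss2 (N-1) t := by
  rcases eq_or_lt_of_le h1 with rfl | hlt
  · rw [gauss2_self (by omega), gauss2_self (by omega), gauss2_out (Or.inr (by omega)),
      add_zero, sub_self, mul_zero, zpow_zero, mul_one]
  · have e1 : gauss2 N t = Pn N.toNat / (Pn t.toNat * Pn (N-t).toNat) := gauss2_eq (by omega) h1
    have e2 : gauss2 (N-1) (t-1) = Pn (N-1).toNat / (Pn (t-1).toNat * Pn (N-t).toNat) := by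
      rw [gauss2_eq (by omega) (by omega), show N - 1 - (t - 1) = N - t by ring]
    have e3 : gauss2 (N-1) t = Pn (N-1).toNat / (Pn t.toNat * Pn (N-1-t).toNat) :=
      gauss2_eq (by omega) (by omega)
    have sN : Pn N.toNat = Pn (N-1).toNat * (vv ^ (2*N) - 1) := by
      rw [show N.toNat = (N-1).toNat + 1 by omega, Pn_succ,
        show 2*(((N-1).toNat:ℤ))+2 = 2*N by omega]
    have st : Pn t.toNat = Pn (t-1).toNat * (vv ^ (2*t) - 1) := by
      rw [show t.toNat = (t-1).toNat + 1 by omega, Pn_succ,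
        show 2*(((t-1).toNat:ℤ))+2 = 2*t by omega]
    have sNt : Pn (N-t).toNat = Pn (N-1-t).toNat * (vv ^ (2*(N-t)) - 1) := by
      rw [show (N-t).toNat = (N-1-t).toNat + 1 by omega, Pn_succ,
        show 2*(((N-1-t).toNat:ℤ))+2 = 2*(N-t) by omega]
    have hvN : vv ^ (2*N) = vv ^ (2*t) * vv ^ (2*(N-t)) := by
      rw [← zpow_add₀ vv_ne_zero]
      congr 1
      ring
    have n1 := Pn_ne_zero (t-1).toNat
    have n2 := Pn_ne_zero (N-1-t).toNat
    have n4 : vv ^ (2*t) - 1 ≠ 0 := vpow_sub_one_ne_zero (by omega)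
    have n5 : vv ^ (2*(N-t)) - 1 ≠ 0 := vpow_sub_one_ne_zero (by omega)
    rw [e1, e2, e3, sN, st, sNt, hvN]
    exact pascal_core' _ _ _ _ _ n1 n2 n4 n5

lemma vpow_mul_vpow (m n : ℤ) : vv ^ m * vv ^ n = vv ^ (m + n) := (zpow_add₀ vv_ne_zero m n).symm

lemma sgauss_pascal {N t : ℤ} (hN : 1 ≤ N) (ht : 0 ≤ t) :
    sgauss N t = vv ^ (-(N - t)) * sgauss (N-1) (t-1) + vv ^ t * sgauss (N-1) t := by
  rcases lt_trichotomy t N with hlt | rfl | hgt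
  · rcases eq_or_lt_of_le ht with rfl | ht1
    · rw [sgauss_zero (by omega), sgauss_zero (by omega), sgauss_out (Or.inl (by omega))]
      norm_num
    · have h0 : 1 ≤ t := ht1
      simp only [sgauss]
      rw [gauss2_pascal h0 (by omega), mul_add]
      congr 1
      · rw [← mul_assoc, vpow_mul_vpow]
        congr 2
        ring
      · rw [← mul_assoc, ← mul_assoc, vpow_mul_vpow, vpow_mul_vpow]
        congr 2
        ring
  · rcases eq_or_lt_of_le ht with rfl | ht1
    · rw [sgauss_zero (by omega), sgauss_zero (by omega), sgauss_out (Or.inl (by omega))]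
      norm_num
    · have h0 : 1 ≤ t := ht1
      simp only [sgauss]
      rw [gauss2_pascal h0 (by omega), mul_add]
      congr 1
      · rw [← mul_assoc, vpow_mul_vpow]
        congr 2
        ring
      · rw [← mul_assoc, ← mul_assoc, vpow_mul_vpow, vpow_mul_vpow]
        congr 2
        ring
  · rw [sgauss_out (Or.inr hgt), sgauss_out (Or.inr (by omega)), sgauss_out (Or.inr (by omega))]
    norm_num

lemma sgauss_pascal' {N t : ℤ} (hN : 1 ≤ N) (ht : 0 ≤ t) :
    sgauss N t = vv ^ (N - t) * sgauss (N-1) (t-1) + vv ^ (-t) * sgauss (N-1) t := by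
  rcases le_or_gt t N with hle | hgt
  · rcases eq_or_lt_of_le ht with rfl | ht1
    · rw [sgauss_zero (by omega), sgauss_zero (by omega), sgauss_out (Or.inl (by omega))]
      norm_num
    · have h0 : 1 ≤ t := ht1
      simp only [sgauss]
      rw [gauss2_pascal' h0 hle, mul_add]
      congr 1
      · rw [← mul_assoc, ← mul_assoc, vpow_mul_vpow, vpow_mul_vpow]
        congr 2
        ring
      · rw [← mul_assoc, vpow_mul_vpow]
        congr 2
        ring
  · rw [sgauss_out (Or.inr hgt), sgauss_out (Or.inr (by omega)), sgauss_out (Or.inr (by omega))]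
    norm_num

lemma Icc_top {c : ℤ} (hc : 1 ≤ c) :
    Finset.Icc (0:ℤ) c = insert c (Finset.Icc (0:ℤ) (c-1)) := by
  ext x
  simp only [Finset.mem_Icc, Finset.mem_insert]
  omega

lemma sum_top {c : ℤ} (hc : 1 ≤ c) (f : ℤ → RatFunc ℚ) :
    ∑ k ∈ Finset.Icc (0:ℤ) c, f k = f c + ∑ k ∈ Finset.Icc (0:ℤ) (c-1), f k := by
  rw [Icc_top hc, Finset.sum_insert (by simp)]

lemma sum_shift {c : ℤ} (hc : 1 ≤ c) (f : ℤ → RatFunc ℚ) (h0 : f 0 = 0) :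
    ∑ k ∈ Finset.Icc (0:ℤ) c, f k = ∑ k ∈ Finset.Icc (0:ℤ) (c-1), f (k+1) := by
  have hbot : Finset.Icc (0:ℤ) c = insert 0 (Finset.Icc (1:ℤ) c) := by
    ext x
    simp only [Finset.mem_Icc, Finset.mem_insert]
    omega
  rw [hbot, Finset.sum_insert (by simp), h0, zero_add]
  have hmap : Finset.Icc (1:ℤ) c = Finset.map (addLeftEmbedding (1:ℤ)) (Finset.Icc (0:ℤ) (c-1)) := by
    rw [Finset.map_add_left_Icc]
    norm_num
  rw [hmap, Finset.sum_map]
  apply Finset.sum_congr rfl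
  intro k _
  simp [addLeftEmbedding, add_comm]

/-- The summand of the main identity. -/
noncomputable def F (a b c k : ℤ) : RatFunc ℚ :=
  (-1 : RatFunc ℚ) ^ (c - k) * vv ^ (-(k * (b + c))) *
    sgauss (a - b - 1 + c - k) (a - b - 1) * sgauss (a + c) k

/-- The main sum. -/
noncomputable def S (a b c : ℤ) : RatFunc ℚ := ∑ k ∈ Finset.Icc (0 : ℤ) c, F a b c k

lemma neg_one_zpow_succ (n : ℤ) : (-1 : RatFunc ℚ) ^ (n + 1) = -(-1 : RatFunc ℚ) ^ n := by
  rw [zpow_add₀ (by norm_num : (-1 : RatFunc ℚ) ≠ 0)]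
  norm_num

/-- Partial alternating sum identity:
`∑_{k=0}^{j} (-1)^{j-k} v^{-k(N-1)} [N,k] = v^{-jN} [N-1,j]`. -/
lemma P1 (N : ℤ) (hN : 1 ≤ N) :
    ∀ j : ℤ, 0 ≤ j →
      ∑ k ∈ Finset.Icc (0:ℤ) j, (-1 : RatFunc ℚ) ^ (j - k) * vv ^ (-(k * (N-1))) * sgauss N k
        = vv ^ (-(j * N)) * sgauss (N-1) j := by
  refine Int.le_induction ?_ ?_
  · rw [Finset.Icc_self, Finset.sum_singleton]
    norm_num
    rw [sgauss_zero (by omega), sgauss_zero (by omega)]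
  · intro j hj IH
    rw [sum_top (by omega), show j + 1 - 1 = j by ring]
    have step : ∑ k ∈ Finset.Icc (0:ℤ) j,
        (-1 : RatFunc ℚ) ^ (j + 1 - k) * vv ^ (-(k * (N-1))) * sgauss N k
        = -(vv ^ (-(j * N)) * sgauss (N-1) j) := by
      rw [← IH, ← Finset.sum_neg_distrib]
      apply Finset.sum_congr rfl
      intro k _
      rw [show j + 1 - k = (j - k) + 1 by ring, neg_one_zpow_succ]
      ring
    rw [step, sub_self, zpow_zero, one_mul]
    rw [sgauss_pascal' hN (show (0:ℤ) ≤ j + 1 by omega)]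
    rw [mul_add, ← mul_assoc, ← mul_assoc, vpow_mul_vpow, vpow_mul_vpow]
    rw [show -((j+1) * (N-1)) + (N - (j+1)) = -(j * N) by ring,
      show -((j+1) * (N-1)) + -(j+1) = -((j+1) * N) by ring,
      show j + 1 - 1 = j by ring]
    ring

lemma sgauss_congr {N t N' t' : ℤ} (hN : N = N') (ht : t = t') : sgauss N t = sgauss N' t' := by
  rw [hN, ht]

lemma S_rec (a b c : ℤ) (hab : b + 1 < a) (hb : 0 ≤ b) (hc : 1 ≤ c) :
    S a b c = (vv ^ (1 - a - b - 2*c) - vv ^ (-(a - b - 1))) * S a b (c-1)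
      + vv ^ c * S (a-1) b c := by
  have key : ∀ k ∈ Finset.Icc (0:ℤ) c, F a b c k
      = ((-1:RatFunc ℚ) ^ (c-k) * vv ^ (-(k*(b+c)) - (a+c-k)) *
          sgauss (a-b-1+c-k) (a-b-1) * sgauss (a+c-1) (k-1))
        + (-(vv ^ (-(a-b-1)) * F a b (c-1) k))
        + vv ^ c * F (a-1) b c k := by
    intro k hk
    rw [Finset.mem_Icc] at hk
    obtain ⟨hk0, hkc⟩ := hk
    have hsg2 : sgauss (a+c) k
        = vv ^ (-(a+c-k)) * sgauss (a+c-1) (k-1) + vv ^ k * sgauss (a+c-1) k :=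
      sgauss_pascal (by omega) hk0
    have hsg1 : sgauss (a-b-1+c-k) (a-b-1)
        = vv ^ (-(a-b-1)) * sgauss (a-b-1+(c-1)-k) (a-b-1)
          + vv ^ (c-k) * sgauss (a-1-b-1+c-k) (a-1-b-1) := by
      calc sgauss (a-b-1+c-k) (a-b-1)
          = sgauss (a-b-1+c-k) (a-b-1+c-k-(a-b-1)) := sgauss_symm (by omega)
        _ = sgauss (a-b-1+c-k) (c-k) := sgauss_congr rfl (by ring)
        _ = vv ^ (-(a-b-1+c-k-(c-k))) * sgauss (a-b-1+c-k-1) (c-k-1)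
            + vv ^ (c-k) * sgauss (a-b-1+c-k-1) (c-k) := sgauss_pascal (by omega) (by omega)
        _ = vv ^ (-(a-b-1)) * sgauss (a-b-1+(c-1)-k) (a-b-1)
            + vv ^ (c-k) * sgauss (a-1-b-1+c-k) (a-1-b-1) := by
            congr 1
            · congr 1
              · exact congrArg (fun e => vv ^ e) (by ring)
              · rw [sgauss_symm (show (0:ℤ) ≤ a-b-1+c-k-1 by omega)]
                exact sgauss_congr (by ring) (by ring)
            · congr 1
              rw [sgauss_symm (show (0:ℤ) ≤ a-b-1+c-k-1 by omega)]
              exact sgauss_congr (by ring) (by ring)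
    have hsign : (-1:RatFunc ℚ) ^ (c-k) = -(-1:RatFunc ℚ) ^ (c-1-k) := by
      rw [show c - k = (c-1-k) + 1 by ring, neg_one_zpow_succ]
    have e1 : vv ^ (-(k*(b+c)) - (a+c-k)) = vv ^ (-(k*(b+c))) * vv ^ (-(a+c-k)) := by
      rw [vpow_mul_vpow]
      congr 1
      all_goals ring
    have e2 : vv ^ (-(k*(b+(c-1)))) = vv ^ (-(k*(b+c))) * vv ^ k := by
      rw [vpow_mul_vpow]
      congr 1
      all_goals ring
    have e3 : vv ^ c = vv ^ k * vv ^ (c-k) := by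
      rw [vpow_mul_vpow]
      congr 1
      all_goals ring
    simp only [F]
    rw [hsg2, hsg1, hsign, e1, e2, e3]
    rw [show a + (c-1) = a + c - 1 by ring, show a - 1 + c = a + c - 1 by ring]
    ring
  rw [S, Finset.sum_congr rfl key, Finset.sum_add_distrib, Finset.sum_add_distrib]
  have hA : ∑ k ∈ Finset.Icc (0:ℤ) c,
      ((-1:RatFunc ℚ) ^ (c-k) * vv ^ (-(k*(b+c)) - (a+c-k)) *
        sgauss (a-b-1+c-k) (a-b-1) * sgauss (a+c-1) (k-1))
      = vv ^ (1-a-b-2*c) * S a b (c-1) := by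
    rw [sum_shift hc _ (by rw [sgauss_out (N := a+c-1) (t := (0:ℤ)-1) (Or.inl (by omega))]; ring)]
    rw [S, Finset.mul_sum]
    apply Finset.sum_congr rfl
    intro k hk
    rw [Finset.mem_Icc] at hk
    have hv : vv ^ (-((k+1)*(b+c)) - (a+c-(k+1)))
        = vv ^ (1-a-b-2*c) * vv ^ (-(k*(b+(c-1)))) := by
      rw [vpow_mul_vpow]
      congr 1
      all_goals ring
    rw [F, hv, show c - (k+1) = c - 1 - k by ring, show k + 1 - 1 = k by ring,
      sgauss_congr (show a-b-1+c-(k+1) = a-b-1+(c-1)-k by ring) (rfl : a-b-1 = a-b-1),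
      sgauss_congr (show a+(c-1) = a+c-1 by ring) (rfl : k = k)]
    ring
  have hB : ∑ k ∈ Finset.Icc (0:ℤ) c, (-(vv ^ (-(a-b-1)) * F a b (c-1) k))
      = -(vv ^ (-(a-b-1)) * S a b (c-1)) := by
    rw [Finset.sum_neg_distrib, ← Finset.mul_sum, sum_top hc]
    have h0 : F a b (c-1) c = 0 := by
      rw [F, sgauss_out (Or.inr (by omega))]
      ring
    rw [h0, zero_add, S]
  have hC : ∑ k ∈ Finset.Icc (0:ℤ) c, vv ^ c * F (a-1) b c k = vv ^ c * S (a-1) b c := by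
    rw [← Finset.mul_sum, S]
  rw [hA, hB, hC]
  ring

lemma grel_core (X Y P Q R : RatFunc ℚ) (hQ : Q ≠ 0) (hR : R ≠ 0) (hX : X ≠ 0) :
    X * (P * Y / (Q * X * R)) = Y * (P / (Q * R)) := by
  field_simp

lemma T_step (a b c : ℤ) (hb : 0 ≤ b) (hc : 0 ≤ c) :
    (vv ^ (1-a-b-2*(c+1)) - vv ^ (-(a-b-1))) * (vv ^ (-(c*(a+c))) * sgauss (b+c) c)
      + vv ^ (c+1) * (vv ^ (-((c+1)*(a-1+(c+1)))) * sgauss (b+(c+1)) (c+1))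
    = vv ^ (-((c+1)*(a+(c+1)))) * sgauss (b+(c+1)) (c+1) := by
  have n1 : vv ^ (2*(c+1)) - 1 ≠ 0 := vpow_sub_one_ne_zero (by omega)
  have n2 : vv ^ (2*(b+(c+1))) - 1 ≠ 0 := vpow_sub_one_ne_zero (by omega)
  have grel : (vv ^ (2*(c+1)) - 1) * gauss2 (b+(c+1)) (c+1)
      = (vv ^ (2*(b+(c+1))) - 1) * gauss2 (b+c) c := by
    have e1 : gauss2 (b+(c+1)) (c+1)
        = Pn (b+(c+1)).toNat / (Pn (c+1).toNat * Pn (b+(c+1)-(c+1)).toNat) :=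
      gauss2_eq (by omega) (by omega)
    have e2 : gauss2 (b+c) c = Pn (b+c).toNat / (Pn c.toNat * Pn (b+(c+1)-(c+1)).toNat) := by
      rw [gauss2_eq (by omega) (by omega), show b+(c+1)-(c+1) = b+c-c by ring]
    have sBC : Pn (b+(c+1)).toNat = Pn (b+c).toNat * (vv ^ (2*(b+(c+1))) - 1) := by
      rw [show (b+(c+1)).toNat = (b+c).toNat + 1 by omega, Pn_succ,
        show 2*(((b+c).toNat:ℤ))+2 = 2*(b+(c+1)) by omega]
    have sC : Pn (c+1).toNat = Pn c.toNat * (vv ^ (2*(c+1)) - 1) := by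
      rw [show (c+1).toNat = c.toNat + 1 by omega, Pn_succ,
        show 2*((c.toNat:ℤ))+2 = 2*(c+1) by omega]
    have m1 := Pn_ne_zero c.toNat
    have m2 := Pn_ne_zero (b+(c+1)-(c+1)).toNat
    rw [e1, e2, sBC, sC]
    exact grel_core _ _ _ _ _ m1 m2 n1
  apply mul_left_cancel₀ n1
  simp only [sgauss]
  have h1 : vv ^ (1-a-b-2*(c+1)) * (vv ^ (-(c*(a+c))) * vv ^ (-(c*(b+c-c))))
      = vv ^ (-((c+1)*(a+b+(c+1)))) := by
    rw [vpow_mul_vpow, vpow_mul_vpow]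
    congr 1
    ring
  have h2 : vv ^ (-(a-b-1)) * (vv ^ (-(c*(a+c))) * vv ^ (-(c*(b+c-c))))
      = vv ^ (-((c+1)*(a+b+(c+1)))) * vv ^ (2*(b+(c+1))) := by
    rw [vpow_mul_vpow, vpow_mul_vpow, vpow_mul_vpow]
    congr 1
    ring
  have h3 : vv ^ (c+1) * (vv ^ (-((c+1)*(a-1+(c+1)))) * vv ^ (-((c+1)*(b+(c+1)-(c+1)))))
      = vv ^ (-((c+1)*(a+b+(c+1)))) * vv ^ (2*(c+1)) := by
    rw [vpow_mul_vpow, vpow_mul_vpow, vpow_mul_vpow]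
    congr 1
    ring
  have h4 : vv ^ (-((c+1)*(a+(c+1)))) * vv ^ (-((c+1)*(b+(c+1)-(c+1))))
      = vv ^ (-((c+1)*(a+b+(c+1)))) := by
    rw [vpow_mul_vpow]
    congr 1
    ring
  linear_combination ((vv ^ (2*(c+1)) - 1) * gauss2 (b+c) c) * h1
    - ((vv ^ (2*(c+1)) - 1) * gauss2 (b+c) c) * h2
    + ((vv ^ (2*(c+1)) - 1) * gauss2 (b+(c+1)) (c+1)) * h3
    - ((vv ^ (2*(c+1)) - 1) * gauss2 (b+(c+1)) (c+1)) * h4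
    + (vv ^ (-((c+1)*(a+b+(c+1)))) * vv ^ (2*(c+1)) - vv ^ (-((c+1)*(a+b+(c+1))))) * grel

lemma base_c0 (a b : ℤ) (hab : b < a) (hb : 0 ≤ b) :
    S a b 0 = vv ^ (-(0*(a+0))) * sgauss (b+0) 0 := by
  rw [S, Finset.Icc_self, Finset.sum_singleton, F,
    sgauss_congr (show a-b-1+0-0 = a-b-1 by ring) (rfl : a-b-1 = a-b-1),
    sgauss_self (by omega), sgauss_zero (show (0:ℤ) ≤ a+0 by omega),
    sgauss_zero (show (0:ℤ) ≤ b+0 by omega)]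
  norm_num

lemma base_m0 (b c : ℤ) (hb : 0 ≤ b) (hc : 0 ≤ c) :
    S (b+1) b c = vv ^ (-(c*(b+1+c))) * sgauss (b+c) c := by
  have h := P1 (b+c+1) (by omega) c hc
  rw [S]
  have term : ∀ k ∈ Finset.Icc (0:ℤ) c, F (b+1) b c k
      = (-1:RatFunc ℚ) ^ (c-k) * vv ^ (-(k*((b+c+1)-1))) * sgauss (b+c+1) k := by
    intro k hk
    rw [Finset.mem_Icc] at hk
    rw [F, sgauss_congr (show b+1-b-1+c-k = c-k by ring) (show b+1-b-1 = 0 by ring),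
      sgauss_zero (by omega), mul_one,
      sgauss_congr (show b+1+c = b+c+1 by ring) (rfl : k = k),
      show -(k*(b+c)) = -(k*((b+c+1)-1)) by ring]
  rw [Finset.sum_congr rfl term, h,
    sgauss_congr (show b+c+1-1 = b+c by ring) (rfl : c = c),
    show -(c*(b+c+1)) = -(c*(b+1+c)) by ring]

lemma main_aux : ∀ m : ℤ, 0 ≤ m → ∀ b c : ℤ, 0 ≤ b → 0 ≤ c →
    S (b+1+m) b c = vv ^ (-(c*(b+1+m+c))) * sgauss (b+c) c := by
  refine Int.le_induction ?_ ?_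
  · intro b c hb hc
    rw [show b+1+(0:ℤ) = b+1 by ring]
    exact base_m0 b c hb hc
  · intro m hm IH b c hb hc
    refine Int.le_induction
      (motive := fun c _ => S (b+1+(m+1)) b c = vv ^ (-(c*(b+1+(m+1)+c))) * sgauss (b+c) c)
      ?_ ?_ c hc
    · exact base_c0 (b+1+(m+1)) b (by omega) hb
    · intro c hc' IHc
      have hrec := S_rec (b+1+(m+1)) b (c+1) (by omega) hb (by omega)
      have hIHm' : S (b+1+(m+1)-1) b (c+1)
          = vv ^ (-((c+1)*((b+1+(m+1)-1)+(c+1)))) * sgauss (b+(c+1)) (c+1) := by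
        rw [show b+1+(m+1)-1 = b+1+m by ring]
        exact IH b (c+1) hb (by omega)
      rw [hrec, show c+1-1 = c by ring, IHc, hIHm']
      exact T_step (b+1+(m+1)) b c hb hc'

theorem gauss_identity_three (a b c : ℤ) (hab : b < a) (hb : 0 ≤ b) (hc : 0 ≤ c) :
    ∑ k ∈ Finset.Icc (0 : ℤ) c,
        (-1 : RatFunc ℚ) ^ (c - k) * vv ^ (-(k * (b + c))) *
          sgauss (a - b - 1 + c - k) (a - b - 1) * sgauss (a + c) k =
      vv ^ (-(c * (a + c))) * sgauss (b + c) c := by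
  have h := main_aux (a-b-1) (by omega) b c hb hc
  rw [show b+1+(a-b-1) = a by ring] at h
  simp only [S, F] at h
  exact h
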